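/- For the Dyck-language SCFG with production rule S → p₁·ab + p₂·abS + p₃·aSb + p₄·aSbS, where p₁, p₂, p₃, p₄ ≥ 0, ∑ᵢ pᵢ = 1 and p₁ > 0: the iteration G₀ = 0, G_{k+1} = p₁ z² + (p₂ + p₃) z² G_k + p₄ z² G_k² converges coefficientwise to a formal power series G ∈ ℝ[[z]] with nonnegative coefficients that satisfies G = p₁ z² + (p₂ + p₃) z² G + p₄ z² G² (equivalently p₄ z² G² + ((p₂+p₃) z² − 1) G + p₁ z² = 0); moreover the coefficients of G sum to at most 1, and G is algebraic over ℝ[z]. -/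

import Mathlib

open PowerSeries Filter

/-- The iteration `G₀ = 0`, `G_{k+1} = p₁ z² + (p₂ + p₃) z² G_k + p₄ z² G_k²`
associated to the Dyck-language SCFG `S → p₁·ab + p₂·abS + p₃·aSb + p₄·aSbS`. -/
noncomputable def dyckIter (p₁ p₂ p₃ p₄ : ℝ) : ℕ → PowerSeries ℝ
  | 0 => 0
  | k + 1 =>
      PowerSeries.C p₁ * PowerSeries.X ^ 2 +
      PowerSeries.C (p₂ + p₃) * PowerSeries.X ^ 2 * dyckIter p₁ p₂ p₃ p₄ k +
      PowerSeries.C p₄ * PowerSeries.X ^ 2 * (dyckIter p₁ p₂ p₃ p₄ k) ^ 2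

/-- `f ∈ ℝ[[z]]` is algebraic over the polynomial ring ℝ[z]: some nonzero
`Q ∈ ℝ[z][y]` vanishes at `f`. -/
def IsAlgebraicPS (f : PowerSeries ℝ) : Prop :=
  ∃ Q : Polynomial (Polynomial ℝ), Q ≠ 0 ∧ Polynomial.aeval f Q = 0

namespace DyckAux

/-- The iteration map. -/
noncomputable def F (p₁ p₂ p₃ p₄ : ℝ) (A : PowerSeries ℝ) : PowerSeries ℝ :=
  PowerSeries.C p₁ * PowerSeries.X ^ 2 +
    PowerSeries.C (p₂ + p₃) * PowerSeries.X ^ 2 * A +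
    PowerSeries.C p₄ * PowerSeries.X ^ 2 * A ^ 2

lemma dyckIter_succ (p₁ p₂ p₃ p₄ : ℝ) (k : ℕ) :
    dyckIter p₁ p₂ p₃ p₄ (k + 1) = F p₁ p₂ p₃ p₄ (dyckIter p₁ p₂ p₃ p₄ k) := rfl

lemma coeff_CXsq_mul (c : ℝ) (A : PowerSeries ℝ) (n : ℕ) :
    PowerSeries.coeff n (PowerSeries.C c * PowerSeries.X ^ 2 * A) =
      if 2 ≤ n then c * PowerSeries.coeff (n - 2) A else 0 := by
  rw [mul_comm (PowerSeries.C c) (PowerSeries.X ^ 2), mul_assoc, coeff_X_pow_mul']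
  split_ifs with h
  · rw [coeff_C_mul]
  · rfl

lemma coeff_sq_congr {A B : PowerSeries ℝ} {n : ℕ}
    (h : ∀ m < n, PowerSeries.coeff m A = PowerSeries.coeff m B) {d : ℕ} (hd : d < n) :
    PowerSeries.coeff d (A ^ 2) = PowerSeries.coeff d (B ^ 2) := by
  rw [pow_two, pow_two, coeff_mul, coeff_mul]
  refine Finset.sum_congr rfl fun p hp => ?_
  rw [Finset.HasAntidiagonal.mem_antidiagonal] at hp
  rw [h p.1 (by omega), h p.2 (by omega)]

lemma coeff_F_congr (p₁ p₂ p₃ p₄ : ℝ) {A B : PowerSeries ℝ} {n : ℕ}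
    (h : ∀ m < n, PowerSeries.coeff m A = PowerSeries.coeff m B)
    {m : ℕ} (hm : m ≤ n + 1) :
    PowerSeries.coeff m (F p₁ p₂ p₃ p₄ A) = PowerSeries.coeff m (F p₁ p₂ p₃ p₄ B) := by
  simp only [F, map_add, add_mul, coeff_CXsq_mul]
  split_ifs with h2
  · rw [h (m - 2) (by omega), coeff_sq_congr h (show m - 2 < n by omega)]
  · rfl

lemma coeff_stab (p₁ p₂ p₃ p₄ : ℝ) :
    ∀ k j, k ≤ j → ∀ m < k,
      PowerSeries.coeff m (dyckIter p₁ p₂ p₃ p₄ j) =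
        PowerSeries.coeff m (dyckIter p₁ p₂ p₃ p₄ k) := by
  intro k
  induction k with
  | zero => intro j _ m hm; omega
  | succ k ih =>
    intro j hj m hm
    obtain ⟨j', rfl⟩ : ∃ j', j = j' + 1 := ⟨j - 1, by omega⟩
    rw [dyckIter_succ, dyckIter_succ]
    exact coeff_F_congr p₁ p₂ p₃ p₄ (fun m hm => ih j' (by omega) m hm) (by omega)

/-- The limiting series. -/
noncomputable def G (p₁ p₂ p₃ p₄ : ℝ) : PowerSeries ℝ :=
  PowerSeries.mk fun n => PowerSeries.coeff n (dyckIter p₁ p₂ p₃ p₄ (n + 1))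

lemma coeff_G_eq (p₁ p₂ p₃ p₄ : ℝ) (n k : ℕ) (h : n < k) :
    PowerSeries.coeff n (G p₁ p₂ p₃ p₄) =
      PowerSeries.coeff n (dyckIter p₁ p₂ p₃ p₄ k) := by
  rw [G, coeff_mk, coeff_stab p₁ p₂ p₃ p₄ (n + 1) k (by omega) n (by omega)]

lemma iter_nonneg (p₁ p₂ p₃ p₄ : ℝ) (h₁ : 0 ≤ p₁) (h₂₃ : 0 ≤ p₂ + p₃) (h₄ : 0 ≤ p₄) :
    ∀ k n, 0 ≤ PowerSeries.coeff n (dyckIter p₁ p₂ p₃ p₄ k) := by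
  intro k
  induction k with
  | zero => intro n; simp [dyckIter]
  | succ k ih =>
    intro n
    have hsq : ∀ d, 0 ≤ PowerSeries.coeff d ((dyckIter p₁ p₂ p₃ p₄ k) ^ 2) := by
      intro d
      rw [pow_two, coeff_mul]
      exact Finset.sum_nonneg fun p _ => mul_nonneg (ih p.1) (ih p.2)
    have h1 : PowerSeries.C p₁ * (PowerSeries.X : PowerSeries ℝ) ^ 2 =
        PowerSeries.C p₁ * PowerSeries.X ^ 2 * 1 := by ring
    rw [dyckIter_succ, F, map_add, map_add, h1, coeff_CXsq_mul, coeff_CXsq_mul, coeff_CXsq_mul]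
    have hone : ∀ d : ℕ, (0:ℝ) ≤ PowerSeries.coeff d (1 : PowerSeries ℝ) := by
      intro d; rw [coeff_one]; split_ifs <;> norm_num
    refine add_nonneg (add_nonneg ?_ ?_) ?_
    · split_ifs with h
      · exact mul_nonneg h₁ (hone _)
      · exact le_refl 0
    · split_ifs with h
      · exact mul_nonneg h₂₃ (ih _)
      · exact le_refl 0
    · split_ifs with h
      · exact mul_nonneg h₄ (hsq _)
      · exact le_refl 0

lemma shift_sum (g : PowerSeries ℝ) :
    ∀ M, ∑ n ∈ Finset.range (M + 2), PowerSeries.coeff n (PowerSeries.X ^ 2 * g) =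
      ∑ n ∈ Finset.range M, PowerSeries.coeff n g := by
  intro M
  induction M with
  | zero =>
    simp [Finset.sum_range_succ, coeff_X_pow_mul']
  | succ M ih =>
    rw [show M + 1 + 2 = (M + 2) + 1 by ring, Finset.sum_range_succ, ih,
      Finset.sum_range_succ, show M + 2 = M + 2 by rfl, coeff_X_pow_mul]

lemma sum_coeff_CXsq_mul_le (c : ℝ) (hc : 0 ≤ c) (A : PowerSeries ℝ)
    (hA : ∀ n, 0 ≤ PowerSeries.coeff n A) (t : ℝ)
    (ht : ∀ M, ∑ n ∈ Finset.range M, PowerSeries.coeff n A ≤ t) (M : ℕ) :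
    ∑ n ∈ Finset.range M, PowerSeries.coeff n (PowerSeries.C c * PowerSeries.X ^ 2 * A)
      ≤ c * t := by
  have key : ∀ n, PowerSeries.coeff n (PowerSeries.C c * PowerSeries.X ^ 2 * A) =
      c * PowerSeries.coeff n (PowerSeries.X ^ 2 * A) := by
    intro n
    rw [mul_comm (PowerSeries.C c) (PowerSeries.X ^ 2), mul_assoc]
    rw [coeff_X_pow_mul', coeff_X_pow_mul']
    split_ifs with h
    · rw [coeff_C_mul]
    · ring
  have hX : ∀ n, 0 ≤ PowerSeries.coeff n (PowerSeries.X ^ 2 * A) := by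
    intro n; rw [coeff_X_pow_mul']; split_ifs; exacts [hA _, le_refl 0]
  calc ∑ n ∈ Finset.range M, PowerSeries.coeff n
        (PowerSeries.C c * PowerSeries.X ^ 2 * A)
      = c * ∑ n ∈ Finset.range M, PowerSeries.coeff n (PowerSeries.X ^ 2 * A) := by
        rw [Finset.mul_sum]; exact Finset.sum_congr rfl fun n _ => key n
    _ ≤ c * ∑ n ∈ Finset.range (M + 2), PowerSeries.coeff n (PowerSeries.X ^ 2 * A) := by
        apply mul_le_mul_of_nonneg_left _ hc
        apply Finset.sum_le_sum_of_subset_of_nonneg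
        · exact Finset.range_subset_range.2 (by omega)
        · intro n _ _; exact hX n
    _ = c * ∑ n ∈ Finset.range M, PowerSeries.coeff n A := by rw [shift_sum]
    _ ≤ c * t := mul_le_mul_of_nonneg_left (ht M) hc

lemma sum_coeff_sq_le (A : PowerSeries ℝ)
    (hA : ∀ n, 0 ≤ PowerSeries.coeff n A) (M : ℕ) :
    ∑ n ∈ Finset.range M, PowerSeries.coeff n (A ^ 2)
      ≤ (∑ n ∈ Finset.range M, PowerSeries.coeff n A) ^ 2 := by
  have hdisj : ((Finset.range M : Finset ℕ) : Set ℕ).PairwiseDisjoint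
      (fun n => Finset.HasAntidiagonal.antidiagonal n) := by
    intro a _ b _ hab
    simp only [Finset.disjoint_left]
    intro p hpa hpb
    rw [Finset.HasAntidiagonal.mem_antidiagonal] at hpa hpb
    exact hab (hpa ▸ hpb)
  have h1 : ∑ n ∈ Finset.range M, PowerSeries.coeff n (A ^ 2) =
      ∑ p ∈ (Finset.range M).biUnion (fun n => Finset.HasAntidiagonal.antidiagonal n),
        PowerSeries.coeff p.1 A * PowerSeries.coeff p.2 A := by
    rw [Finset.sum_biUnion hdisj]
    exact Finset.sum_congr rfl fun n _ => by rw [pow_two, coeff_mul]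
  rw [h1, pow_two, Finset.sum_mul_sum, ← Finset.sum_product']
  apply Finset.sum_le_sum_of_subset_of_nonneg
  · intro p hp
    simp only [Finset.mem_biUnion, Finset.mem_range, Finset.HasAntidiagonal.mem_antidiagonal] at hp
    obtain ⟨n, hn, hpn⟩ := hp
    simp only [Finset.mem_product, Finset.mem_range]
    omega
  · intro p _ _; exact mul_nonneg (hA _) (hA _)

/-- The scalar iteration. -/
noncomputable def xseq (p₁ p₂ p₃ p₄ : ℝ) : ℕ → ℝ
  | 0 => 0
  | k + 1 => p₁ + (p₂ + p₃) * xseq p₁ p₂ p₃ p₄ k + p₄ * (xseq p₁ p₂ p₃ p₄ k) ^ 2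

lemma xseq_mem (p₁ p₂ p₃ p₄ : ℝ) (h₁ : 0 ≤ p₁) (h₂ : 0 ≤ p₂) (h₃ : 0 ≤ p₃) (h₄ : 0 ≤ p₄)
    (hsum : p₁ + p₂ + p₃ + p₄ = 1) :
    ∀ k, 0 ≤ xseq p₁ p₂ p₃ p₄ k ∧ xseq p₁ p₂ p₃ p₄ k ≤ 1 := by
  intro k
  induction k with
  | zero => simp [xseq]
  | succ k ih =>
    obtain ⟨h0, h1⟩ := ih
    constructor
    · simp only [xseq]
      have : 0 ≤ (xseq p₁ p₂ p₃ p₄ k) ^ 2 := sq_nonneg _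
      nlinarith
    · simp only [xseq]
      have hx2 : (xseq p₁ p₂ p₃ p₄ k) ^ 2 ≤ 1 := by nlinarith
      have e1 : (p₂ + p₃) * xseq p₁ p₂ p₃ p₄ k ≤ p₂ + p₃ :=
        mul_le_of_le_one_right (add_nonneg h₂ h₃) h1
      have e2 : p₄ * (xseq p₁ p₂ p₃ p₄ k) ^ 2 ≤ p₄ :=
        mul_le_of_le_one_right h₄ hx2
      linarith

lemma partial_sum_le (p₁ p₂ p₃ p₄ : ℝ) (h₁ : 0 ≤ p₁) (h₂ : 0 ≤ p₂) (h₃ : 0 ≤ p₃) (h₄ : 0 ≤ p₄)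
    (hsum : p₁ + p₂ + p₃ + p₄ = 1) :
    ∀ k M, ∑ n ∈ Finset.range M, PowerSeries.coeff n (dyckIter p₁ p₂ p₃ p₄ k)
      ≤ xseq p₁ p₂ p₃ p₄ k := by
  have h₂₃ : 0 ≤ p₂ + p₃ := add_nonneg h₂ h₃
  intro k
  induction k with
  | zero => intro M; simp [dyckIter, xseq]
  | succ k ih =>
    intro M
    have hnn := iter_nonneg p₁ p₂ p₃ p₄ h₁ h₂₃ h₄ k
    have hx := xseq_mem p₁ p₂ p₃ p₄ h₁ h₂ h₃ h₄ hsum k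
    have hsnn : 0 ≤ ∑ n ∈ Finset.range M, PowerSeries.coeff n (dyckIter p₁ p₂ p₃ p₄ k) :=
      Finset.sum_nonneg fun n _ => hnn n
    -- first term
    have t1 : ∑ n ∈ Finset.range M, PowerSeries.coeff n
        (PowerSeries.C p₁ * PowerSeries.X ^ 2) ≤ p₁ := by
      have : ∀ n : ℕ, PowerSeries.coeff n (PowerSeries.C p₁ * PowerSeries.X ^ 2) =
          if n = 2 then p₁ else 0 := by
        intro n; rw [coeff_C_mul, coeff_X_pow]; split_ifs <;> simp
      rw [Finset.sum_congr rfl fun n _ => this n, Finset.sum_ite_eq' (Finset.range M) 2 fun _ => p₁]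
      split_ifs <;> simp [h₁]
    have t2 : ∑ n ∈ Finset.range M, PowerSeries.coeff n
        (PowerSeries.C (p₂ + p₃) * PowerSeries.X ^ 2 * dyckIter p₁ p₂ p₃ p₄ k)
        ≤ (p₂ + p₃) * xseq p₁ p₂ p₃ p₄ k :=
      sum_coeff_CXsq_mul_le (p₂ + p₃) h₂₃ _ hnn _ (fun M => ih M) M
    have hsqnn : ∀ n, 0 ≤ PowerSeries.coeff n ((dyckIter p₁ p₂ p₃ p₄ k) ^ 2) := by
      intro n; rw [pow_two, coeff_mul]
      exact Finset.sum_nonneg fun p _ => mul_nonneg (hnn p.1) (hnn p.2)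
    have hsqsum : ∀ M, ∑ n ∈ Finset.range M,
        PowerSeries.coeff n ((dyckIter p₁ p₂ p₃ p₄ k) ^ 2) ≤ (xseq p₁ p₂ p₃ p₄ k) ^ 2 := by
      intro M
      refine le_trans (sum_coeff_sq_le _ hnn M) ?_
      have := ih M
      have hs0 : 0 ≤ ∑ n ∈ Finset.range M, PowerSeries.coeff n (dyckIter p₁ p₂ p₃ p₄ k) :=
        Finset.sum_nonneg fun n _ => hnn n
      nlinarith
    have t3 : ∑ n ∈ Finset.range M, PowerSeries.coeff n
        (PowerSeries.C p₄ * PowerSeries.X ^ 2 * (dyckIter p₁ p₂ p₃ p₄ k) ^ 2)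
        ≤ p₄ * (xseq p₁ p₂ p₃ p₄ k) ^ 2 :=
      sum_coeff_CXsq_mul_le p₄ h₄ _ hsqnn _ hsqsum M
    have expand : ∑ n ∈ Finset.range M, PowerSeries.coeff n (dyckIter p₁ p₂ p₃ p₄ (k + 1)) =
        (∑ n ∈ Finset.range M, PowerSeries.coeff n (PowerSeries.C p₁ * PowerSeries.X ^ 2)) +
        (∑ n ∈ Finset.range M, PowerSeries.coeff n
          (PowerSeries.C (p₂ + p₃) * PowerSeries.X ^ 2 * dyckIter p₁ p₂ p₃ p₄ k)) +
        (∑ n ∈ Finset.range M, PowerSeries.coeff n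
          (PowerSeries.C p₄ * PowerSeries.X ^ 2 * (dyckIter p₁ p₂ p₃ p₄ k) ^ 2)) := by
      rw [← Finset.sum_add_distrib, ← Finset.sum_add_distrib]
      refine Finset.sum_congr rfl fun n _ => ?_
      rw [dyckIter_succ, F, map_add, map_add]
    rw [expand, show xseq p₁ p₂ p₃ p₄ (k + 1) =
      p₁ + (p₂ + p₃) * xseq p₁ p₂ p₃ p₄ k + p₄ * (xseq p₁ p₂ p₃ p₄ k) ^ 2 from rfl]
    linarith

end DyckAux

/-- For the Dyck-language SCFG `S → p₁·ab + p₂·abS + p₃·aSb + p₄·aSbS`, the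
fixed-point iteration converges coefficientwise to a power series `G` with
nonnegative coefficients satisfying `G = p₁ z² + (p₂+p₃) z² G + p₄ z² G²`;
the coefficients of `G` sum to at most 1, and `G` is algebraic over ℝ[z]. -/
theorem dyck_scfg_genfun (p₁ p₂ p₃ p₄ : ℝ)
    (h₁ : 0 ≤ p₁) (h₂ : 0 ≤ p₂) (h₃ : 0 ≤ p₃) (h₄ : 0 ≤ p₄)
    (hsum : p₁ + p₂ + p₃ + p₄ = 1) (hpos : 0 < p₁) :
    ∃ G : PowerSeries ℝ,
      (∀ n : ℕ, Tendsto (fun k => PowerSeries.coeff n (dyckIter p₁ p₂ p₃ p₄ k))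
        atTop (nhds (PowerSeries.coeff n G))) ∧
      (∀ n : ℕ, 0 ≤ PowerSeries.coeff n G) ∧
      G = PowerSeries.C p₁ * PowerSeries.X ^ 2 +
          PowerSeries.C (p₂ + p₃) * PowerSeries.X ^ 2 * G +
          PowerSeries.C p₄ * PowerSeries.X ^ 2 * G ^ 2 ∧
      Summable (fun n => PowerSeries.coeff n G) ∧
      (∑' n : ℕ, PowerSeries.coeff n G) ≤ 1 ∧
      IsAlgebraicPS G := by
  classical
  have h₂₃ : 0 ≤ p₂ + p₃ := add_nonneg h₂ h₃
  set G : PowerSeries ℝ := DyckAux.G p₁ p₂ p₃ p₄ with hGdef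
  have hGeq : ∀ n k, n < k →
      PowerSeries.coeff n G = PowerSeries.coeff n (dyckIter p₁ p₂ p₃ p₄ k) :=
    fun n k h => DyckAux.coeff_G_eq p₁ p₂ p₃ p₄ n k h
  -- fixed point equation
  have hfix : G = PowerSeries.C p₁ * PowerSeries.X ^ 2 +
      PowerSeries.C (p₂ + p₃) * PowerSeries.X ^ 2 * G +
      PowerSeries.C p₄ * PowerSeries.X ^ 2 * G ^ 2 := by
    have : G = DyckAux.F p₁ p₂ p₃ p₄ G := by
      ext n
      have hagree : ∀ m < n, PowerSeries.coeff m G =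
          PowerSeries.coeff m (dyckIter p₁ p₂ p₃ p₄ n) := fun m hm => hGeq m n hm
      calc PowerSeries.coeff n G
          = PowerSeries.coeff n (dyckIter p₁ p₂ p₃ p₄ (n + 1)) := hGeq n (n + 1) (by omega)
        _ = PowerSeries.coeff n (DyckAux.F p₁ p₂ p₃ p₄ (dyckIter p₁ p₂ p₃ p₄ n)) := by
            rw [DyckAux.dyckIter_succ]
        _ = PowerSeries.coeff n (DyckAux.F p₁ p₂ p₃ p₄ G) :=
            (DyckAux.coeff_F_congr p₁ p₂ p₃ p₄ hagree (by omega)).symm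
    exact this
  -- nonnegativity
  have hnn : ∀ n : ℕ, 0 ≤ PowerSeries.coeff n G := by
    intro n
    rw [hGeq n (n + 1) (by omega)]
    exact DyckAux.iter_nonneg p₁ p₂ p₃ p₄ h₁ h₂₃ h₄ (n + 1) n
  -- partial sums bounded by 1
  have hpartial : ∀ M : ℕ, ∑ n ∈ Finset.range M, PowerSeries.coeff n G ≤ 1 := by
    intro M
    have e : ∑ n ∈ Finset.range M, PowerSeries.coeff n G =
        ∑ n ∈ Finset.range M, PowerSeries.coeff n (dyckIter p₁ p₂ p₃ p₄ M) :=
      Finset.sum_congr rfl fun n hn => hGeq n M (Finset.mem_range.1 hn)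
    rw [e]
    exact le_trans (DyckAux.partial_sum_le p₁ p₂ p₃ p₄ h₁ h₂ h₃ h₄ hsum M M)
      (DyckAux.xseq_mem p₁ p₂ p₃ p₄ h₁ h₂ h₃ h₄ hsum M).2
  have hsummable : Summable (fun n => PowerSeries.coeff n G) :=
    summable_of_sum_range_le hnn hpartial
  refine ⟨G, ?_, hnn, hfix, hsummable, Real.tsum_le_of_sum_range_le hnn hpartial, ?_⟩
  · intro n
    apply Tendsto.congr' _ (tendsto_const_nhds (x := PowerSeries.coeff n G))
    filter_upwards [eventually_ge_atTop (n + 1)] with k hk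
    exact hGeq n k (by omega)
  · -- algebraicity
    have hmapC : ∀ c : ℝ, algebraMap (Polynomial ℝ) (PowerSeries ℝ) (Polynomial.C c) =
        PowerSeries.C c := by
      intro c
      rw [PowerSeries.algebraMap_apply', Polynomial.coe_C]
      simp
    have hmapX : algebraMap (Polynomial ℝ) (PowerSeries ℝ) Polynomial.X = PowerSeries.X := by
      rw [PowerSeries.algebraMap_apply', Polynomial.coe_X]
      simp
    refine ⟨Polynomial.C (Polynomial.C p₄ * Polynomial.X ^ 2) * Polynomial.X ^ 2 +
      Polynomial.C (Polynomial.C (p₂ + p₃) * Polynomial.X ^ 2 - 1) * Polynomial.X +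
      Polynomial.C (Polynomial.C p₁ * Polynomial.X ^ 2), ?_, ?_⟩
    · intro hQ
      have h0 := congrArg (fun q : Polynomial (Polynomial ℝ) => (q.coeff 0).coeff 2) hQ
      simp only [Polynomial.coeff_add, Polynomial.coeff_C_mul, Polynomial.coeff_X_pow,
        Polynomial.coeff_X_zero, Polynomial.coeff_C_zero, Polynomial.coeff_zero,
        Polynomial.mul_coeff_zero, mul_zero, zero_add, add_zero] at h0
      norm_num at h0
      exact hpos.ne' h0
    · simp only [map_add, Polynomial.aeval_C, Polynomial.aeval_X, map_mul, map_pow,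
        map_sub, map_one, hmapC, hmapX]
      have hC : PowerSeries.C (p₂ + p₃) = PowerSeries.C p₂ + PowerSeries.C p₃ :=
        map_add _ _ _
      linear_combination -hfix - PowerSeries.X ^ 2 * G * hC
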